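/- The adjoint projection I_K^{d^k} : HΛ^k(K) → P_1^-Λ^k(K), defined by requiring ⟨d^k I_K ω, μ⟩ − ⟨I_K ω, δ_{k+1} μ⟩ = ⟨d^k ω, μ⟩ − ⟨ω, δ_{k+1} μ⟩ for all μ ∈ P_1^{*,-}Λ^{k+1}, is well-defined: the linear system determining I_K^{d^k} ω has a unique solution in P_1^-Λ^k(K). -/

import Mathlib

open MvPolynomial Finset MeasureTheory

/-- Strictly increasing `k`-indices in `{1,…,n}`, modelled as `k`-element subsets of `Fin n`. -/
abbrev Idx (n k : ℕ) := {s : Finset (Fin n) // s.card = k}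

/-- A differential `k`-form with polynomial coefficients on `ℝⁿ`:
one polynomial coefficient for each increasing `k`-index. -/
abbrev Form (n k : ℕ) := Idx n k → MvPolynomial (Fin n) ℝ

/-- The sign `(-1)^{#\{j ∈ s : j < i\}}`. -/
noncomputable def sgn {n : ℕ} (s : Finset (Fin n)) (i : Fin n) : ℝ :=
  (-1) ^ (s.filter (· < i)).card

def eraseIdx {n k : ℕ} (s : Idx n (k+1)) {i : Fin n} (hi : i ∈ s.1) : Idx n k :=
  ⟨s.1.erase i, by simp [Finset.card_erase_of_mem hi, s.2]⟩

def insertIdx {n k : ℕ} (s : Idx n k) {i : Fin n} (hi : i ∉ s.1) : Idx n (k+1) :=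
  ⟨insert i s.1, by simp [Finset.card_insert_of_notMem hi, s.2]⟩

/-- The exterior derivative `d^k`. -/
noncomputable def extd (n k : ℕ) : Form n k →ₗ[ℝ] Form n (k+1) where
  toFun ω := fun s => ∑ i ∈ s.1.attach, sgn s.1 i.1 • pderiv i.1 (ω (eraseIdx s i.2))
  map_add' ω η := by
    funext s
    simp [Finset.sum_add_distrib, smul_add]
  map_smul' c ω := by
    funext s
    simp only [Pi.smul_apply, RingHom.id_apply]
    rw [Finset.smul_sum]
    exact Finset.sum_congr rfl (fun i _ => by rw [(pderiv i.1).map_smul, smul_comm])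

/-- The Koszul operator `κ` (contraction with the position vector field). -/
noncomputable def koszul (n k : ℕ) : Form n (k+1) →ₗ[ℝ] Form n k where
  toFun ω := fun s =>
    ∑ i ∈ (s.1ᶜ).attach, sgn s.1 i.1 • (X i.1 * ω (insertIdx s (Finset.mem_compl.mp i.2)))
  map_add' ω η := by
    funext s
    simp [Finset.sum_add_distrib, mul_add, smul_add]
  map_smul' c ω := by
    funext s
    simp only [Pi.smul_apply, RingHom.id_apply, mul_smul_comm]
    rw [Finset.smul_sum]
    exact Finset.sum_congr rfl (fun i _ => (smul_comm _ _ _))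

/-- The codifferential `δ_{k+1}` (the formal adjoint of `d^k` on Euclidean `ℝⁿ`,
which coincides with `(-1)^{(k+1)n} ⋆ d^{n-k-1} ⋆`). -/
noncomputable def codiff (n k : ℕ) : Form n (k+1) →ₗ[ℝ] Form n k where
  toFun ω := fun s =>
    -∑ i ∈ (s.1ᶜ).attach, sgn s.1 i.1 • pderiv i.1 (ω (insertIdx s (Finset.mem_compl.mp i.2)))
  map_add' ω η := by
    funext s
    simp [Finset.sum_add_distrib, smul_add]
    ring
  map_smul' c ω := by
    funext s
    simp only [Pi.smul_apply, RingHom.id_apply, smul_neg, neg_inj]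
    rw [Finset.smul_sum]
    exact Finset.sum_congr rfl (fun i _ => by rw [(pderiv i.1).map_smul, smul_comm])

/-- The operator `κ^δ = ⋆ ∘ κ ∘ ⋆` (exterior multiplication by `Σ xᵢ dxⁱ`, up to sign). -/
noncomputable def kappaDelta (n k : ℕ) : Form n k →ₗ[ℝ] Form n (k+1) where
  toFun ω := fun s => ∑ i ∈ s.1.attach, sgn s.1 i.1 • (X i.1 * ω (eraseIdx s i.2))
  map_add' ω η := by
    funext s
    simp [Finset.sum_add_distrib, mul_add, smul_add]
  map_smul' c ω := by
    funext s
    simp only [Pi.smul_apply, RingHom.id_apply, mul_smul_comm]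
    rw [Finset.smul_sum]
    exact Finset.sum_congr rfl (fun i _ => (smul_comm _ _ _))

/-- Sign of the permutation `(t, tᶜ) ↦ (1,…,n)`, i.e. `⋆ dx^t = starSign t · dx^{tᶜ}`. -/
noncomputable def starSign {n : ℕ} (t : Finset (Fin n)) : ℝ :=
  (-1) ^ (∑ i ∈ t, ((tᶜ).filter (· < i)).card)

/-- The Hodge star operator on `k`-forms on `ℝⁿ`, `k + l = n`. -/
noncomputable def hodge (n k l : ℕ) (h : k + l = n) : Form n k →ₗ[ℝ] Form n l where
  toFun ω := fun s => starSign (s.1ᶜ) •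
    ω ⟨s.1ᶜ, by rw [Finset.card_compl, s.2, Fintype.card_fin]; omega⟩
  map_add' ω η := by funext s; simp [smul_add]
  map_smul' c ω := by funext s; simp only [Pi.smul_apply, RingHom.id_apply]; rw [smul_comm]

/-- The monomial form `x_τ dx^σ`. -/
noncomputable def monForm (n k : ℕ) (τ : Finset (Fin n)) (σ : Idx n k) : Form n k :=
  fun s => if s = σ then ∏ i ∈ τ, X i else 0

/-- `Q_1^-Λ^k = span{ x_τ dx^σ : |σ| = k, 0 ≤ |τ| ≤ n-k, τ ⊆ σᶜ }`. -/
noncomputable def Qm (n k : ℕ) : Submodule ℝ (Form n k) :=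
  Submodule.span ℝ
    {ω | ∃ (τ : Finset (Fin n)) (σ : Idx n k), τ.card ≤ n - k ∧ τ ⊆ (σ.1)ᶜ ∧ ω = monForm n k τ σ}

/-- `Q_1^{*,-}Λ^k = span{ x_τ' dx^σ' : |σ'| = k, 0 ≤ |τ'| ≤ k, τ' ⊆ σ' }`. -/
noncomputable def Qs (n k : ℕ) : Submodule ℝ (Form n k) :=
  Submodule.span ℝ
    {ω | ∃ (τ : Finset (Fin n)) (σ : Idx n k), τ.card ≤ k ∧ τ ⊆ σ.1 ∧ ω = monForm n k τ σ}

/-- `P_0Λ^k`: forms with constant coefficients. -/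
noncomputable def P0 (n k : ℕ) : Submodule ℝ (Form n k) :=
  Submodule.span ℝ {ω | ∃ σ : Idx n k, ω = monForm n k ∅ σ}

/-- The Whitney space `P_1^-Λ^k = P_0Λ^k + κ(P_0Λ^{k+1})`. -/
noncomputable def Pm (n k : ℕ) : Submodule ℝ (Form n k) :=
  P0 n k ⊔ Submodule.map (koszul n k) (P0 n (k+1))

/-- The star Whitney space `P_1^{*,-}Λ^{k+1} = P_0Λ^{k+1} + κ^δ(P_0Λ^k)`. -/
noncomputable def PsS (n k : ℕ) : Submodule ℝ (Form n (k+1)) :=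
  P0 n (k+1) ⊔ Submodule.map (kappaDelta n k) (P0 n k)

/-- `L²` inner product of `k`-forms on the centered box `[-r, r]`. -/
noncomputable def binner (n k : ℕ) (r : Fin n → ℝ) (ω η : Form n k) : ℝ :=
  ∑ s : Idx n k, ∫ x in Set.Icc (fun i => -(r i)) r, eval x (ω s * η s)

/-- `L²` inner product of `k`-forms on the reference cube `T = [-1,1]ⁿ`. -/
noncomputable def finner (n k : ℕ) (ω η : Form n k) : ℝ :=
  binner n k (fun _ => (1 : ℝ)) ω η

open MeasureTheory in
lemma integrableOn_eval (n : ℕ) (p : MvPolynomial (Fin n) ℝ) :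
    IntegrableOn (fun x => eval x p) (Set.Icc (fun _ => -(1:ℝ)) (fun _ => 1)) volume := by
  exact (MvPolynomial.continuous_eval (p := p)).continuousOn.integrableOn_compact isCompact_Icc

lemma finner_add_right (n k : ℕ) (ω η η' : Form n k) :
    finner n k ω (η + η') = finner n k ω η + finner n k ω η' := by
  unfold finner binner
  rw [← Finset.sum_add_distrib]
  refine Finset.sum_congr rfl fun s _ => ?_
  have : ω s * (η + η') s = ω s * η s + ω s * η' s := by
    simp [mul_add]
  rw [this]
  have h1 := integrableOn_eval n (ω s * η s)
  have h2 := integrableOn_eval n (ω s * η' s)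
  rw [← MeasureTheory.integral_add h1 h2]
  simp

lemma finner_smul_right (n k : ℕ) (c : ℝ) (ω η : Form n k) :
    finner n k ω (c • η) = c * finner n k ω η := by
  unfold finner binner
  rw [Finset.mul_sum]
  refine Finset.sum_congr rfl fun s _ => ?_
  have : ω s * (c • η) s = c • (ω s * η s) := by
    simp [mul_smul_comm]
  rw [this]
  rw [show (fun x => eval x (c • (ω s * η s))) = fun x => c • eval x (ω s * η s) from
    funext fun x => by simp [MvPolynomial.smul_eval]]
  rw [MeasureTheory.integral_smul]
  simp

noncomputable def finnerL (n k : ℕ) (ω : Form n k) : Form n k →ₗ[ℝ] ℝ where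
  toFun η := finner n k ω η
  map_add' := finner_add_right n k ω
  map_smul' c η := finner_smul_right n k c ω η

lemma finner_comm (n k : ℕ) (ω η : Form n k) :
    finner n k ω η = finner n k η ω := by
  unfold finner binner
  exact Finset.sum_congr rfl fun s _ => by rw [mul_comm]

lemma finner_mon_right (n k : ℕ) (ω : Form n k) (σ : Idx n k) :
    finner n k ω (monForm n k ∅ σ) =
      ∫ x in Set.Icc (fun _ => -(1:ℝ)) (fun _ => 1), eval x (ω σ) := by
  unfold finner binner monForm
  have : ∀ s : Idx n k, (∫ x in Set.Icc (fun i => -((1:ℝ))) (fun _ => (1:ℝ)),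
      eval x (ω s * if s = σ then ∏ i ∈ (∅ : Finset (Fin n)), X i else 0)) =
      if s = σ then (∫ x in Set.Icc (fun _ => -(1:ℝ)) (fun _ => 1), eval x (ω σ)) else 0 := by
    intro s
    by_cases h : s = σ
    · subst h; simp
    · simp [h]
  rw [Finset.sum_congr rfl fun s _ => this s, Finset.sum_ite_eq' Finset.univ σ]
  simp

lemma integral_const_cube (n : ℕ) (c : ℝ) :
    (∫ _x in Set.Icc (fun _ : Fin n => -(1:ℝ)) (fun _ => 1), c) = 2^n * c := by
  rw [MeasureTheory.setIntegral_const]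
  have hle : (fun _ : Fin n => -(1:ℝ)) ≤ fun _ => 1 := fun i => by norm_num
  rw [measureReal_def, Real.volume_Icc_pi_toReal hle]
  norm_num

noncomputable def constF (n k : ℕ) (a : Idx n k → ℝ) : Form n k := fun s => C (a s)

lemma finner_const_mon (n k : ℕ) (a : Idx n k → ℝ) (σ : Idx n k) :
    finner n k (constF n k a) (monForm n k ∅ σ) = 2^n * a σ := by
  rw [finner_mon_right]
  simp only [constF, eval_C]
  exact integral_const_cube n (a σ)

lemma constF_mem_P0 (n k : ℕ) (a : Idx n k → ℝ) : constF n k a ∈ P0 n k := by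
  have : constF n k a = ∑ σ : Idx n k, a σ • monForm n k ∅ σ := by
    funext s
    simp only [Finset.sum_apply, Pi.smul_apply, monForm, Finset.prod_empty]
    rw [Finset.sum_congr rfl (fun σ _ => by rw [smul_ite, smul_zero])]
    rw [Finset.sum_ite_eq Finset.univ s]
    simp [constF, MvPolynomial.smul_eq_C_mul]
  rw [this]
  exact Submodule.sum_smul_mem _ _ fun σ _ => Submodule.subset_span ⟨σ, rfl⟩

lemma exists_coeff_of_mem_P0 (n k : ℕ) (ω : Form n k) (h : ω ∈ P0 n k) :
    ∃ a : Idx n k → ℝ, ω = constF n k a := by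
  refine Submodule.span_induction ?_ ?_ ?_ ?_ h
  · rintro x ⟨σ, rfl⟩
    refine ⟨fun s => if s = σ then 1 else 0, funext fun s => ?_⟩
    simp only [monForm, constF, Finset.prod_empty, apply_ite C, map_one, map_zero]
  · exact ⟨0, funext fun s => by simp [constF]⟩
  · rintro x y - - ⟨a, rfl⟩ ⟨b, rfl⟩
    exact ⟨a + b, funext fun s => by simp [constF]⟩
  · rintro c x - ⟨a, rfl⟩
    exact ⟨c • a, funext fun s => by simp [constF, MvPolynomial.smul_eq_C_mul]⟩

lemma filter_lt_erase {n : ℕ} (s : Finset (Fin n)) (i : Fin n) :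
    (s.erase i).filter (· < i) = s.filter (· < i) := by
  ext j
  simp only [Finset.mem_filter, Finset.mem_erase]
  constructor
  · rintro ⟨⟨-, hj⟩, hlt⟩; exact ⟨hj, hlt⟩
  · rintro ⟨hj, hlt⟩; exact ⟨⟨ne_of_lt hlt, hj⟩, hlt⟩

lemma filter_lt_insert {n : ℕ} (s : Finset (Fin n)) (i : Fin n) :
    (insert i s).filter (· < i) = s.filter (· < i) := by
  rw [Finset.filter_insert, if_neg (lt_irrefl i)]

lemma sgn_erase {n : ℕ} (s : Finset (Fin n)) (i : Fin n) : sgn (s.erase i) i = sgn s i := by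
  unfold sgn; rw [filter_lt_erase]

lemma sgn_insert {n : ℕ} (s : Finset (Fin n)) (i : Fin n) : sgn (insert i s) i = sgn s i := by
  unfold sgn; rw [filter_lt_insert]

lemma sgn_mul_self {n : ℕ} (s : Finset (Fin n)) (i : Fin n) : sgn s i * sgn s i = 1 := by
  unfold sgn; rw [← mul_pow]; norm_num

lemma pderiv_ite_one {n : ℕ} (P : Prop) [Decidable P] (i : Fin n) :
    pderiv i (if P then (1 : MvPolynomial (Fin n) ℝ) else 0) = 0 := by
  split_ifs <;> simp

lemma extd_mon (n k : ℕ) (σ : Idx n k) : extd n k (monForm n k ∅ σ) = 0 := by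
  funext t
  simp only [extd, LinearMap.coe_mk, AddHom.coe_mk, monForm, Finset.prod_empty, Pi.zero_apply]
  rw [Finset.sum_congr rfl (fun i _ => by rw [pderiv_ite_one, smul_zero])]
  simp

lemma codiff_mon (n k : ℕ) (σ : Idx n (k+1)) : codiff n k (monForm n (k+1) ∅ σ) = 0 := by
  funext t
  simp only [codiff, LinearMap.coe_mk, AddHom.coe_mk, monForm, Finset.prod_empty, Pi.zero_apply]
  rw [Finset.sum_congr rfl (fun i _ => by rw [pderiv_ite_one, smul_zero])]
  simp

lemma pderiv_monForm {n k : ℕ} (i : Fin n) (σ s : Idx n k) :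
    pderiv i (monForm n k ∅ σ s) = 0 := by
  unfold monForm; rw [Finset.prod_empty]; exact pderiv_ite_one _ i

lemma pderiv_X_mul_mon {n k : ℕ} (i j : Fin n) (σ s : Idx n k) :
    pderiv i (X j * monForm n k ∅ σ s) = if j = i then monForm n k ∅ σ s else 0 := by
  rw [pderiv_mul, pderiv_monForm, mul_zero, add_zero]
  by_cases h : j = i
  · subst h; rw [if_pos rfl, pderiv_X_self, one_mul]
  · rw [if_neg h, pderiv_X_of_ne h, zero_mul]

lemma extd_koszul_mon (n k : ℕ) (σ : Idx n (k+1)) :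
    extd n k (koszul n k (monForm n (k+1) ∅ σ)) = ((k:ℝ)+1) • monForm n (k+1) ∅ σ := by
  funext t
  have hterm : ∀ i : {x // x ∈ t.1},
      sgn t.1 i.1 • pderiv i.1 ((koszul n k (monForm n (k+1) ∅ σ)) (eraseIdx t i.2))
        = monForm n (k+1) ∅ σ t := by
    rintro ⟨i, hi⟩
    have h1 : (koszul n k (monForm n (k+1) ∅ σ)) (eraseIdx t hi)
        = ∑ j ∈ (((eraseIdx t hi).1)ᶜ).attach,
            sgn (eraseIdx t hi).1 j.1 •
              (X j.1 * monForm n (k+1) ∅ σ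
                (insertIdx (eraseIdx t hi) (Finset.mem_compl.mp j.2))) := rfl
    rw [h1, map_sum]
    have hmem : i ∈ ((eraseIdx t hi).1)ᶜ := by
      simp [eraseIdx]
    rw [Finset.sum_congr rfl (fun j _ => by
      rw [(pderiv i).map_smul, pderiv_X_mul_mon])]
    rw [Finset.sum_eq_single_of_mem ⟨i, hmem⟩ (Finset.mem_attach _ _) (fun j _ hj => by
      rw [if_neg (fun h : j.1 = i => hj (Subtype.ext h)), smul_zero])]
    rw [if_pos rfl]
    have hins : insertIdx (eraseIdx t hi) (Finset.mem_compl.mp hmem) = t :=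
      Subtype.ext (Finset.insert_erase hi)
    rw [hins, smul_smul]
    have hsgn : sgn t.1 i * sgn (eraseIdx t hi).1 i = 1 := by
      have h2 : (eraseIdx t hi).1 = t.1.erase i := rfl
      rw [h2, sgn_erase, sgn_mul_self]
    show (sgn t.1 i * sgn (eraseIdx t hi).1 i) • monForm n (k+1) ∅ σ t = monForm n (k+1) ∅ σ t
    rw [hsgn, one_smul]
  show (∑ i ∈ t.1.attach, sgn t.1 i.1 •
      pderiv i.1 ((koszul n k (monForm n (k+1) ∅ σ)) (eraseIdx t i.2)))
    = ((k:ℝ)+1) • monForm n (k+1) ∅ σ t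
  rw [Finset.sum_congr rfl (fun i _ => hterm i), Finset.sum_const, Finset.card_attach, t.2]
  rw [← Nat.cast_smul_eq_nsmul ℝ (k+1)]
  push_cast
  rfl

lemma codiff_kappaDelta_mon (n k : ℕ) (σ : Idx n k) :
    codiff n k (kappaDelta n k (monForm n k ∅ σ))
      = (-(((n - k : ℕ)) : ℝ)) • monForm n k ∅ σ := by
  funext t
  have hterm : ∀ i : {x // x ∈ t.1ᶜ},
      sgn t.1 i.1 • pderiv i.1 ((kappaDelta n k (monForm n k ∅ σ))
        (insertIdx t (Finset.mem_compl.mp i.2)))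
        = monForm n k ∅ σ t := by
    rintro ⟨i, hi⟩
    have hnot : i ∉ t.1 := Finset.mem_compl.mp hi
    have h1 : (kappaDelta n k (monForm n k ∅ σ)) (insertIdx t hnot)
        = ∑ j ∈ ((insertIdx t hnot).1).attach,
            sgn (insertIdx t hnot).1 j.1 •
              (X j.1 * monForm n k ∅ σ (eraseIdx (insertIdx t hnot) j.2)) := rfl
    rw [h1, map_sum]
    have hmem : i ∈ (insertIdx t hnot).1 := Finset.mem_insert_self i t.1
    rw [Finset.sum_congr rfl (fun j _ => by
      rw [(pderiv i).map_smul, pderiv_X_mul_mon])]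
    rw [Finset.sum_eq_single_of_mem ⟨i, hmem⟩ (Finset.mem_attach _ _) (fun j _ hj => by
      rw [if_neg (fun h : j.1 = i => hj (Subtype.ext h)), smul_zero])]
    rw [if_pos rfl]
    have hers : eraseIdx (insertIdx t hnot) hmem = t :=
      Subtype.ext (Finset.erase_insert hnot)
    rw [hers, smul_smul]
    have hsgn : sgn t.1 i * sgn (insertIdx t hnot).1 i = 1 := by
      have h2 : (insertIdx t hnot).1 = insert i t.1 := rfl
      rw [h2, sgn_insert, sgn_mul_self]
    show (sgn t.1 i * sgn (insertIdx t hnot).1 i) • monForm n k ∅ σ t = monForm n k ∅ σ t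
    rw [hsgn, one_smul]
  show -(∑ i ∈ (t.1ᶜ).attach, sgn t.1 i.1 •
      pderiv i.1 ((kappaDelta n k (monForm n k ∅ σ)) (insertIdx t (Finset.mem_compl.mp i.2))))
    = (-(((n - k : ℕ)) : ℝ)) • monForm n k ∅ σ t
  rw [Finset.sum_congr rfl (fun i _ => hterm i), Finset.sum_const, Finset.card_attach]
  have hcard : (t.1ᶜ).card = n - k := by
    rw [Finset.card_compl, t.2, Fintype.card_fin]
  rw [hcard, ← Nat.cast_smul_eq_nsmul ℝ (n-k), neg_smul]

lemma extd_eq_zero_of_mem_P0 (n k : ℕ) (c : Form n k) (hc : c ∈ P0 n k) :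
    extd n k c = 0 := by
  have := LinearMap.eqOn_span (R := ℝ) (f := extd n k) (g := (0 : Form n k →ₗ[ℝ] Form n (k+1)))
    (fun x hx => by obtain ⟨σ, rfl⟩ := hx; simpa using extd_mon n k σ) hc
  simpa using this

lemma codiff_eq_zero_of_mem_P0 (n k : ℕ) (μ : Form n (k+1)) (hμ : μ ∈ P0 n (k+1)) :
    codiff n k μ = 0 := by
  have := LinearMap.eqOn_span (R := ℝ) (f := codiff n k)
    (g := (0 : Form n (k+1) →ₗ[ℝ] Form n k))
    (fun x hx => by obtain ⟨σ, rfl⟩ := hx; simpa using codiff_mon n k σ) hμ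
  simpa using this

lemma extd_koszul_of_mem_P0 (n k : ℕ) (ν : Form n (k+1)) (hν : ν ∈ P0 n (k+1)) :
    extd n k (koszul n k ν) = ((k:ℝ)+1) • ν := by
  have := LinearMap.eqOn_span (R := ℝ) (f := (extd n k).comp (koszul n k))
    (g := ((k:ℝ)+1) • (LinearMap.id : Form n (k+1) →ₗ[ℝ] Form n (k+1)))
    (fun x hx => by obtain ⟨σ, rfl⟩ := hx; simpa using extd_koszul_mon n k σ) hν
  simpa using this

lemma codiff_kappaDelta_of_mem_P0 (n k : ℕ) (c : Form n k) (hc : c ∈ P0 n k) :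
    codiff n k (kappaDelta n k c) = (-(((n - k : ℕ)) : ℝ)) • c := by
  have := LinearMap.eqOn_span (R := ℝ) (f := (codiff n k).comp (kappaDelta n k))
    (g := (-(((n - k : ℕ)) : ℝ)) • (LinearMap.id : Form n k →ₗ[ℝ] Form n k))
    (fun x hx => by obtain ⟨σ, rfl⟩ := hx; simpa using codiff_kappaDelta_mon n k σ) hc
  simpa using this

/-- The bilinear functional of the adjoint projection, as a linear map in `μ`. -/
noncomputable def Bmap (n k : ℕ) (α : Form n k) : Form n (k+1) →ₗ[ℝ] ℝ :=
  finnerL n (k+1) (extd n k α) - (finnerL n k α).comp (codiff n k)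

lemma Bmap_apply (n k : ℕ) (α : Form n k) (μ : Form n (k+1)) :
    Bmap n k α μ = finner n (k+1) (extd n k α) μ - finner n k α (codiff n k μ) := rfl

lemma PsS_eq_span (n k : ℕ) : PsS n k = Submodule.span ℝ
    ({ω | ∃ σ : Idx n (k+1), ω = monForm n (k+1) ∅ σ} ∪
      (kappaDelta n k '' {ω | ∃ σ : Idx n k, ω = monForm n k ∅ σ})) := by
  rw [Submodule.span_union]
  unfold PsS P0
  rw [Submodule.map_span]

lemma finner_zero_right (n k : ℕ) (ω : Form n k) : finner n k ω 0 = 0 :=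
  (finnerL n k ω).map_zero

lemma finner_smul_left (n k : ℕ) (c : ℝ) (ω η : Form n k) :
    finner n k (c • ω) η = c * finner n k ω η := by
  rw [finner_comm, finner_smul_right, finner_comm]

lemma finner_add_left (n k : ℕ) (ω ω' η : Form n k) :
    finner n k (ω + ω') η = finner n k ω η + finner n k ω' η := by
  rw [finner_comm, finner_add_right, finner_comm, finner_comm n k η ω']

lemma finner_sub_left (n k : ℕ) (ω ω' η : Form n k) :
    finner n k (ω - ω') η = finner n k ω η - finner n k ω' η := by
  have h := (finnerL n k η).map_sub ω ω'
  rw [finner_comm]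
  rw [show finner n k η (ω - ω') = finnerL n k η (ω - ω') from rfl, h]
  rw [show finnerL n k η ω = finner n k η ω from rfl,
    show finnerL n k η ω' = finner n k η ω' from rfl, finner_comm n k η ω,
    finner_comm n k η ω']

lemma finner_sub_right (n k : ℕ) (ω η η' : Form n k) :
    finner n k ω (η - η') = finner n k ω η - finner n k ω η' :=
  (finnerL n k ω).map_sub η η'

lemma Bmap_sub (n k : ℕ) (α β : Form n k) (μ : Form n (k+1)) :
    Bmap n k (α - β) μ = Bmap n k α μ - Bmap n k β μ := by
  simp only [Bmap_apply, (extd n k).map_sub, finner_sub_left]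
  ring

lemma finner_zero_left (n k : ℕ) (η : Form n k) : finner n k 0 η = 0 := by
  rw [finner_comm]; exact finner_zero_right n k η

/-- well-posedness of the adjoint projection, eq. (2.5). On the cube
`K = [-1,1]ⁿ`, for every `k`-form `ω` there exists a unique `η ∈ P_1^-Λ^k(K)` such that
`⟨d^k η, μ⟩ - ⟨η, δ_{k+1} μ⟩ = ⟨d^k ω, μ⟩ - ⟨ω, δ_{k+1} μ⟩` for all `μ ∈ P_1^{*,-}Λ^{k+1}(K)`;
i.e. the linear system determining `I_K^{d^k} ω` has a unique solution. -/
theorem stmt10 (n k : ℕ) (hk : k + 1 ≤ n) (ω : Form n k) :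
    ∃! η : Form n k, η ∈ Pm n k ∧ ∀ μ ∈ PsS n k,
      finner n (k+1) (extd n k η) μ - finner n k η (codiff n k μ)
        = finner n (k+1) (extd n k ω) μ - finner n k ω (codiff n k μ) := by
  have hvol : (2:ℝ)^n ≠ 0 := by positivity
  have hK : ((k:ℝ)+1) ≠ 0 := by positivity
  have hnk1 : 1 ≤ n - k := by omega
  have hcnk : (((n-k:ℕ)):ℝ) ≠ 0 := by
    have h0 : (0:ℕ) < n - k := hnk1
    exact_mod_cast h0.ne'
  set b : Idx n (k+1) → ℝ := fun σ' =>
    finner n (k+1) (extd n k ω) (monForm n (k+1) ∅ σ') / (((k:ℝ)+1) * 2^n) with hb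
  set νb : Form n (k+1) := constF n (k+1) b with hνb
  set a : Idx n k → ℝ := fun σ =>
    (finner n (k+1) (extd n k ω) (kappaDelta n k (monForm n k ∅ σ))
      + ((n-k:ℕ):ℝ) * finner n k ω (monForm n k ∅ σ)
      - ((k:ℝ)+1) * finner n (k+1) νb (kappaDelta n k (monForm n k ∅ σ))
      - ((n-k:ℕ):ℝ) * finner n k (koszul n k νb) (monForm n k ∅ σ))
      / (((n-k:ℕ):ℝ) * 2^n) with ha
  set η : Form n k := constF n k a + koszul n k νb with hη
  have hηmem : η ∈ Pm n k :=
    Submodule.add_mem _ (Submodule.mem_sup_left (constF_mem_P0 n k a))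
      (Submodule.mem_sup_right (Submodule.mem_map_of_mem (constF_mem_P0 n (k+1) b)))
  have hextdη : extd n k η = ((k:ℝ)+1) • νb := by
    rw [hη, (extd n k).map_add, extd_eq_zero_of_mem_P0 n k _ (constF_mem_P0 n k a),
      extd_koszul_of_mem_P0 n k νb (constF_mem_P0 n (k+1) b), zero_add]
  have hcase1 : ∀ σ' : Idx n (k+1),
      Bmap n k η (monForm n (k+1) ∅ σ') = Bmap n k ω (monForm n (k+1) ∅ σ') := by
    intro σ'
    rw [Bmap_apply, Bmap_apply, codiff_mon, finner_zero_right, finner_zero_right, hextdη,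
      finner_smul_left, hνb, finner_const_mon, hb]
    field_simp
  have hcase2 : ∀ σ : Idx n k,
      Bmap n k η (kappaDelta n k (monForm n k ∅ σ)) =
      Bmap n k ω (kappaDelta n k (monForm n k ∅ σ)) := by
    intro σ
    rw [Bmap_apply, Bmap_apply, codiff_kappaDelta_mon, finner_smul_right, finner_smul_right,
      hextdη, finner_smul_left, hη, finner_add_left, finner_const_mon, ha]
    field_simp
    ring
  have hmain : ∀ μ ∈ PsS n k, Bmap n k η μ = Bmap n k ω μ := by
    intro μ hμ
    rw [PsS_eq_span] at hμ
    refine LinearMap.eqOn_span (R := ℝ) (f := Bmap n k η) (g := Bmap n k ω) ?_ hμ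
    rintro x (⟨σ', rfl⟩ | ⟨c, ⟨σ, rfl⟩, rfl⟩)
    · exact hcase1 σ'
    · exact hcase2 σ
  refine ⟨η, ⟨hηmem, fun μ hμ => hmain μ hμ⟩, ?_⟩
  rintro y ⟨hymem, hy⟩
  have hθPs : ∀ μ ∈ PsS n k, Bmap n k (y - η) μ = 0 := by
    intro μ hμ
    have h1 : Bmap n k y μ = Bmap n k ω μ := hy μ hμ
    have h2 : Bmap n k η μ = Bmap n k ω μ := hmain μ hμ
    rw [Bmap_sub, h1, h2, sub_self]
  have hθmem : y - η ∈ Pm n k := Submodule.sub_mem _ hymem hηmem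
  obtain ⟨c, hc, z, hz, hsum⟩ := Submodule.mem_sup.mp hθmem
  obtain ⟨ν, hν, rfl⟩ := hz
  obtain ⟨a', rfl⟩ := exists_coeff_of_mem_P0 n k c hc
  obtain ⟨b', rfl⟩ := exists_coeff_of_mem_P0 n (k+1) ν hν
  have hB : ∀ μ ∈ PsS n k,
      Bmap n k (constF n k a' + koszul n k (constF n (k+1) b')) μ = 0 := by
    intro μ hμ
    rw [hsum]; exact hθPs μ hμ
  have hb0 : ∀ σ', b' σ' = 0 := by
    intro σ'
    have hμ1 : monForm n (k+1) ∅ σ' ∈ PsS n k :=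
      Submodule.mem_sup_left (Submodule.subset_span ⟨σ', rfl⟩)
    have h := hB _ hμ1
    rw [Bmap_apply, codiff_mon, finner_zero_right, sub_zero] at h
    have hex : extd n k (constF n k a' + koszul n k (constF n (k+1) b'))
        = ((k:ℝ)+1) • constF n (k+1) b' := by
      rw [(extd n k).map_add, extd_eq_zero_of_mem_P0 n k _ (constF_mem_P0 n k a'),
        extd_koszul_of_mem_P0 n (k) _ (constF_mem_P0 n (k+1) b'), zero_add]
    rw [hex, finner_smul_left, finner_const_mon] at h
    rcases mul_eq_zero.mp h with h' | h'
    · exact absurd h' hK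
    · rcases mul_eq_zero.mp h' with h'' | h''
      · exact absurd h'' hvol
      · exact h''
  have hν0 : constF n (k+1) b' = 0 := funext fun s => by
    simp [constF, hb0 s]
  have ha0 : ∀ σ, a' σ = 0 := by
    intro σ
    have hμ2 : kappaDelta n k (monForm n k ∅ σ) ∈ PsS n k :=
      Submodule.mem_sup_right (Submodule.mem_map_of_mem (Submodule.subset_span ⟨σ, rfl⟩))
    have h := hB _ hμ2
    rw [hν0, map_zero, add_zero] at h
    rw [Bmap_apply, codiff_kappaDelta_mon, extd_eq_zero_of_mem_P0 n k _ (constF_mem_P0 n k a'),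
      finner_zero_left, finner_smul_right, finner_const_mon, zero_sub, neg_mul, neg_neg] at h
    rcases mul_eq_zero.mp h with h' | h'
    · exact absurd h' hcnk
    · rcases mul_eq_zero.mp h' with h'' | h''
      · exact absurd h'' hvol
      · exact h''
  have hθ0 : y - η = 0 := by
    rw [← hsum, hν0, map_zero, add_zero]
    exact funext fun s => by simp [constF, ha0 s]
  exact sub_eq_zero.mp hθ0
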